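/- arXiv:2108.06856 — 2 statements merged into one kernel-verified Lean document; each statement's English description precedes it below -/
import Mathlib

section
/- Let M, N, K be positive integers and let A be a complex M×N matrix and B a complex N×K matrix with AB ≠ 0. Then the singularity function sing(A', B') = ‖A'‖·‖B'‖ / ‖A'B'‖ attains its minimum on the set S = {(A', B') : A' is M×N, B' is N×K, A'B' = AB}; that is, there exists (A₀, B₀) with A₀B₀ = AB such that ‖A₀‖·‖B₀‖ ≤ ‖A'‖·‖B'‖ for every pair (A', B') with A'B' = AB. -/
open Matrix

/-- The Frobenius norm of a complex matrix: the ℓ² norm of its entries. -/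
noncomputable def frob {m n : ℕ} (A : Matrix (Fin m) (Fin n) ℂ) : ℝ :=
  Real.sqrt (∑ i, ∑ j, ‖A i j‖ ^ 2)

lemma frob_nonneg {m n : ℕ} (A : Matrix (Fin m) (Fin n) ℂ) : 0 ≤ frob A :=
  Real.sqrt_nonneg _

lemma frob_sq {m n : ℕ} (A : Matrix (Fin m) (Fin n) ℂ) :
    frob A ^ 2 = ∑ i, ∑ j, ‖A i j‖ ^ 2 := by
  rw [frob, Real.sq_sqrt]
  positivity

lemma entry_sq_le_frob_sq {m n : ℕ} (A : Matrix (Fin m) (Fin n) ℂ) (i : Fin m) (j : Fin n) :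
    ‖A i j‖ ^ 2 ≤ frob A ^ 2 := by
  rw [frob_sq]
  calc ‖A i j‖ ^ 2 ≤ ∑ j', ‖A i j'‖ ^ 2 :=
        Finset.single_le_sum (f := fun j' => ‖A i j'‖ ^ 2) (fun _ _ => by positivity)
          (Finset.mem_univ j)
    _ ≤ ∑ i', ∑ j', ‖A i' j'‖ ^ 2 :=
        Finset.single_le_sum (f := fun i' => ∑ j', ‖A i' j'‖ ^ 2) (fun _ _ => by positivity)
          (Finset.mem_univ i)

lemma frob_pos {m n : ℕ} {A : Matrix (Fin m) (Fin n) ℂ} (hA : A ≠ 0) : 0 < frob A := by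
  rcases (frob_nonneg A).lt_or_eq with h | h
  · exact h
  exfalso
  apply hA
  ext i j
  have h2 : ‖A i j‖ ^ 2 ≤ 0 := by
    have := entry_sq_le_frob_sq A i j
    nlinarith [this]
  have h3 : ‖A i j‖ = 0 := by nlinarith [norm_nonneg (A i j), sq_nonneg ‖A i j‖]
  simpa using h3

lemma frob_smul {m n : ℕ} (c : ℂ) (A : Matrix (Fin m) (Fin n) ℂ) :
    frob (c • A) = ‖c‖ * frob A := by
  unfold frob
  have : ∀ i j, ‖(c • A) i j‖ ^ 2 = ‖c‖ ^ 2 * ‖A i j‖ ^ 2 := by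
    intro i j
    simp [Matrix.smul_apply, norm_smul, mul_pow]
  simp_rw [this, ← Finset.mul_sum]
  rw [Real.sqrt_mul (by positivity), Real.sqrt_sq (norm_nonneg c)]

lemma frob_continuous {m n : ℕ} : Continuous (frob (m := m) (n := n)) := by
  apply Real.continuous_sqrt.comp
  apply continuous_finset_sum
  intro i _
  apply continuous_finset_sum
  intro j _
  exact ((continuous_id.matrix_elem i j).norm.pow 2)

/-- Balancing lemma: any factorization can be rescaled so the sum of squares equals
twice the product of norms. -/
lemma balance {M N K : ℕ} (A' : Matrix (Fin M) (Fin N) ℂ) (B' : Matrix (Fin N) (Fin K) ℂ)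
    (hA : A' ≠ 0) (hB : B' ≠ 0) :
    ∃ (A'' : Matrix (Fin M) (Fin N) ℂ) (B'' : Matrix (Fin N) (Fin K) ℂ),
      A'' * B'' = A' * B' ∧ frob A'' ^ 2 + frob B'' ^ 2 = 2 * (frob A' * frob B') := by
  set a := frob A' with ha
  set b := frob B' with hb
  have ha0 : 0 < a := frob_pos hA
  have hb0 : 0 < b := frob_pos hB
  set t : ℝ := Real.sqrt (b / a) with ht
  have ht0 : 0 < t := Real.sqrt_pos.mpr (by positivity)
  have ht2 : t ^ 2 = b / a := Real.sq_sqrt (by positivity)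
  refine ⟨(t : ℂ) • A', ((t : ℂ)⁻¹) • B', ?_, ?_⟩
  · rw [Matrix.smul_mul, Matrix.mul_smul, smul_smul]
    rw [mul_inv_cancel₀ (by exact_mod_cast ht0.ne')]
    rw [one_smul]
  · rw [frob_smul, frob_smul]
    have hn : ‖(t : ℂ)‖ = t := by
      simp [Complex.norm_real, abs_of_pos ht0]
    have hn' : ‖((t : ℂ)⁻¹)‖ = t⁻¹ := by
      rw [norm_inv, hn]
    rw [hn, hn']
    have : (t * a) ^ 2 + (t⁻¹ * b) ^ 2 = t ^ 2 * a ^ 2 + (t ^ 2)⁻¹ * b ^ 2 := by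
      ring
    rw [this, ht2]
    field_simp
    ring

/-- the singularity `‖A'‖‖B'‖/‖A'B'‖` attains its minimum on
`S = {(A',B') : A'B' = AB}`; since `‖A'B'‖ = ‖AB‖` is constant on `S`, this
means there is `(A₀,B₀)` with `A₀B₀ = AB` minimizing `‖A'‖·‖B'‖`. -/
theorem stmt0 (M N K : ℕ) (hM : 0 < M) (hN : 0 < N) (hK : 0 < K)
    (A : Matrix (Fin M) (Fin N) ℂ) (B : Matrix (Fin N) (Fin K) ℂ)
    (hAB : A * B ≠ 0) :
    ∃ (A₀ : Matrix (Fin M) (Fin N) ℂ) (B₀ : Matrix (Fin N) (Fin K) ℂ),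
      A₀ * B₀ = A * B ∧
      ∀ (A' : Matrix (Fin M) (Fin N) ℂ) (B' : Matrix (Fin N) (Fin K) ℂ),
        A' * B' = A * B → frob A₀ * frob B₀ ≤ frob A' * frob B' := by
  have hA : A ≠ 0 := by rintro rfl; simp at hAB
  have hB : B ≠ 0 := by rintro rfl; simp at hAB
  set c₀ : ℝ := 2 * (frob A * frob B) with hc₀
  set g : Matrix (Fin M) (Fin N) ℂ × Matrix (Fin N) (Fin K) ℂ → ℝ :=
    fun p => frob p.1 ^ 2 + frob p.2 ^ 2 with hg
  set T : Set (Matrix (Fin M) (Fin N) ℂ × Matrix (Fin N) (Fin K) ℂ) :=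
    {p | p.1 * p.2 = A * B ∧ g p ≤ c₀} with hT
  -- T is nonempty
  obtain ⟨Ab, Bb, hAbBb, hbal⟩ := balance A B hA hB
  have hTne : T.Nonempty := ⟨(Ab, Bb), hAbBb, le_of_eq hbal⟩
  -- g is continuous
  have hgc : Continuous g :=
    ((frob_continuous.comp continuous_fst).pow 2).add
      ((frob_continuous.comp continuous_snd).pow 2)
  -- T is closed
  have hTc : IsClosed T := by
    apply IsClosed.inter
    · exact isClosed_eq (continuous_fst.matrix_mul continuous_snd) continuous_const
    · exact isClosed_le hgc continuous_const
  -- T is contained in a compact set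
  set r : ℝ := Real.sqrt c₀ with hr
  have hKc : IsCompact {p : Matrix (Fin M) (Fin N) ℂ × Matrix (Fin N) (Fin K) ℂ |
      (∀ i j, p.1 i j ∈ Metric.closedBall (0 : ℂ) r) ∧
      (∀ i j, p.2 i j ∈ Metric.closedBall (0 : ℂ) r)} := by
    have h1 : IsCompact {C : Matrix (Fin M) (Fin N) ℂ |
        ∀ i j, C i j ∈ Metric.closedBall (0 : ℂ) r} := by
      have : {C : Matrix (Fin M) (Fin N) ℂ | ∀ i j, C i j ∈ Metric.closedBall (0 : ℂ) r} =
          Set.univ.pi (fun _ : Fin M => Set.univ.pi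
            (fun _ : Fin N => Metric.closedBall (0 : ℂ) r)) := by
        ext C
        constructor
        · intro h i _ j _
          exact h i j
        · intro h i j
          exact h i (Set.mem_univ i) j (Set.mem_univ j)
      rw [this]
      exact isCompact_univ_pi fun _ => isCompact_univ_pi fun _ =>
        isCompact_closedBall 0 r
    have h2 : IsCompact {C : Matrix (Fin N) (Fin K) ℂ |
        ∀ i j, C i j ∈ Metric.closedBall (0 : ℂ) r} := by
      have : {C : Matrix (Fin N) (Fin K) ℂ | ∀ i j, C i j ∈ Metric.closedBall (0 : ℂ) r} =
          Set.univ.pi (fun _ : Fin N => Set.univ.pi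
            (fun _ : Fin K => Metric.closedBall (0 : ℂ) r)) := by
        ext C
        constructor
        · intro h i _ j _
          exact h i j
        · intro h i j
          exact h i (Set.mem_univ i) j (Set.mem_univ j)
      rw [this]
      exact isCompact_univ_pi fun _ => isCompact_univ_pi fun _ =>
        isCompact_closedBall 0 r
    have heq : {p : Matrix (Fin M) (Fin N) ℂ × Matrix (Fin N) (Fin K) ℂ |
        (∀ i j, p.1 i j ∈ Metric.closedBall (0 : ℂ) r) ∧
        (∀ i j, p.2 i j ∈ Metric.closedBall (0 : ℂ) r)} =
        ({C : Matrix (Fin M) (Fin N) ℂ | ∀ i j, C i j ∈ Metric.closedBall (0 : ℂ) r} ×ˢ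
         {C : Matrix (Fin N) (Fin K) ℂ | ∀ i j, C i j ∈ Metric.closedBall (0 : ℂ) r}) := by
      ext p
      simp [Set.mem_prod]
    rw [heq]
    exact h1.prod h2
  have hTsub : T ⊆ {p : Matrix (Fin M) (Fin N) ℂ × Matrix (Fin N) (Fin K) ℂ |
      (∀ i j, p.1 i j ∈ Metric.closedBall (0 : ℂ) r) ∧
      (∀ i j, p.2 i j ∈ Metric.closedBall (0 : ℂ) r)} := by
    rintro ⟨P, Q⟩ ⟨-, hle⟩
    have hc₀0 : 0 ≤ c₀ := le_trans (by positivity) hle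
    constructor
    · intro i j
      simp only [Metric.mem_closedBall, dist_zero_right]
      have h1 : ‖P i j‖ ^ 2 ≤ c₀ := by
        calc ‖P i j‖ ^ 2 ≤ frob P ^ 2 := entry_sq_le_frob_sq P i j
          _ ≤ c₀ := le_trans (le_add_of_nonneg_right (by positivity)) hle
      calc ‖P i j‖ = Real.sqrt (‖P i j‖ ^ 2) := (Real.sqrt_sq (norm_nonneg _)).symm
        _ ≤ r := Real.sqrt_le_sqrt h1
    · intro i j
      simp only [Metric.mem_closedBall, dist_zero_right]
      have h1 : ‖Q i j‖ ^ 2 ≤ c₀ := by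
        calc ‖Q i j‖ ^ 2 ≤ frob Q ^ 2 := entry_sq_le_frob_sq Q i j
          _ ≤ c₀ := le_trans (le_add_of_nonneg_left (by positivity)) hle
      calc ‖Q i j‖ = Real.sqrt (‖Q i j‖ ^ 2) := (Real.sqrt_sq (norm_nonneg _)).symm
        _ ≤ r := Real.sqrt_le_sqrt h1
  have hTcomp : IsCompact T := hKc.of_isClosed_subset hTc hTsub
  -- minimize g on T
  obtain ⟨p₀, hp₀T, hp₀min'⟩ := hTcomp.exists_isMinOn hTne hgc.continuousOn
  have hp₀min : ∀ q ∈ T, g p₀ ≤ g q := fun q hq => hp₀min' hq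
  obtain ⟨hp₀eq, hp₀le⟩ := hp₀T
  refine ⟨p₀.1, p₀.2, hp₀eq, ?_⟩
  intro A' B' hA'B'
  have hA' : A' ≠ 0 := by
    rintro rfl
    rw [Matrix.zero_mul] at hA'B'
    exact hAB hA'B'.symm
  have hB' : B' ≠ 0 := by
    rintro rfl
    rw [Matrix.mul_zero] at hA'B'
    exact hAB hA'B'.symm
  obtain ⟨A'', B'', hprod, hbal'⟩ := balance A' B' hA' hB'
  have hprod' : A'' * B'' = A * B := hprod.trans hA'B'
  -- g p₀ ≤ 2 * (frob A' * frob B')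
  have key : g p₀ ≤ 2 * (frob A' * frob B') := by
    by_cases hcase : g (A'', B'') ≤ c₀
    · have := hp₀min (A'', B'') ⟨hprod', hcase⟩
      calc g p₀ ≤ g (A'', B'') := this
        _ = 2 * (frob A' * frob B') := hbal'
    · push_neg at hcase
      calc g p₀ ≤ c₀ := hp₀le
        _ ≤ g (A'', B'') := le_of_lt hcase
        _ = 2 * (frob A' * frob B') := hbal'
  -- AM-GM: 2ab ≤ a² + b²
  have amgm : 2 * (frob p₀.1 * frob p₀.2) ≤ g p₀ := by
    have := sq_nonneg (frob p₀.1 - frob p₀.2)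
    simp only [hg]
    nlinarith
  linarith
end

section
/- Let A be a complex M×N matrix, B a complex N×K matrix with AB ≠ 0, and suppose (A₀, B₀) with A₀B₀ = AB minimizes ‖A'‖·‖B'‖ over all pairs (A', B') with A'B' = AB. Then A₀ᴴA₀·‖B₀‖² = B₀B₀ᴴ·‖A₀‖², i.e., A₀ᴴA₀/‖A₀‖² = B₀B₀ᴴ/‖B₀‖². -/
open Matrix

lemma normSq_hasDerivAt {u : ℝ → ℂ} {d : ℂ} (h : HasDerivAt u d 0) :
    HasDerivAt (fun t => ‖u t‖ ^ 2) (2 * ((starRingEnd ℂ (u 0)) * d).re) 0 := by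
  have hre : HasDerivAt (fun t => (u t).re) d.re 0 :=
    Complex.reCLM.hasFDerivAt.comp_hasDerivAt (x := (0:ℝ)) h
  have him : HasDerivAt (fun t => (u t).im) d.im 0 :=
    Complex.imCLM.hasFDerivAt.comp_hasDerivAt (x := (0:ℝ)) h
  have h2 : HasDerivAt (fun t => (u t).re * (u t).re + (u t).im * (u t).im)
      (d.re * (u 0).re + (u 0).re * d.re + (d.im * (u 0).im + (u 0).im * d.im)) 0 :=
    (hre.mul hre).add (him.mul him)
  have heq : (fun t => ‖u t‖ ^ 2) = fun t => (u t).re * (u t).re + (u t).im * (u t).im := by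
    funext t
    rw [Complex.sq_norm, Complex.normSq_apply]
  rw [heq]
  convert h2 using 1
  simp [Complex.mul_re]
  ring

section helpers

attribute [local instance] Matrix.linftyOpNormedRing Matrix.linftyOpNormedAlgebra

variable {N : ℕ}

private noncomputable def entryCLM (k l : Fin N) : Matrix (Fin N) (Fin N) ℂ →L[ℝ] ℂ :=
  LinearMap.toContinuousLinearMap
    { toFun := fun M => M k l
      map_add' := fun _ _ => rfl
      map_smul' := fun _ _ => rfl }

lemma inv_entry_hasDerivAt (X : Matrix (Fin N) (Fin N) ℂ) (k l : Fin N) :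
    HasDerivAt (fun t : ℝ => Ring.inverse ((1 : Matrix (Fin N) (Fin N) ℂ) + t • X) k l)
      (-(X k l)) 0 := by
  have h1 : HasDerivAt (fun t : ℝ => (1 : Matrix (Fin N) (Fin N) ℂ) + t • X) X 0 := by
    have := ((hasDerivAt_id (0:ℝ)).smul_const X).const_add (1 : Matrix (Fin N) (Fin N) ℂ)
    simp only [one_smul, id] at this
    exact this
  have h2 := hasFDerivAt_ringInverse (𝕜 := ℝ) (1 : (Matrix (Fin N) (Fin N) ℂ)ˣ)
  rw [show ((1 : (Matrix (Fin N) (Fin N) ℂ)ˣ) : Matrix (Fin N) (Fin N) ℂ)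
      = 1 + (0:ℝ) • X by simp] at h2
  have h3 : HasDerivAt (fun t : ℝ => Ring.inverse ((1 : Matrix (Fin N) (Fin N) ℂ) + t • X))
      (-X) 0 := by
    have := h2.comp_hasDerivAt (x := (0:ℝ)) h1
    simp [Function.comp_def] at this
    exact this
  have h4 := (entryCLM k l).hasFDerivAt.comp_hasDerivAt (x := (0:ℝ)) h3
  simp [entryCLM, Function.comp_def] at h4
  exact h4

lemma eventually_isUnit (X : Matrix (Fin N) (Fin N) ℂ) :
    ∀ᶠ t : ℝ in nhds 0, IsUnit ((1 : Matrix (Fin N) (Fin N) ℂ) + t • X) := by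
  have hc : Continuous (fun t : ℝ => (1 : Matrix (Fin N) (Fin N) ℂ) + t • X) := by
    continuity
  have ho := Units.isOpen (R := Matrix (Fin N) (Fin N) ℂ)
  exact (ho.preimage hc).mem_nhds (by simp)

end helpers

/-- a minimal singularity form `(A₀,B₀)` of `AB ≠ 0` satisfies the
stationarity condition `A₀ᴴA₀·‖B₀‖² = B₀B₀ᴴ·‖A₀‖²`. -/
theorem stmt1 (M N K : ℕ)
    (A A₀ : Matrix (Fin M) (Fin N) ℂ) (B B₀ : Matrix (Fin N) (Fin K) ℂ)
    (hAB : A * B ≠ 0) (h0 : A₀ * B₀ = A * B)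
    (hmin : ∀ (A' : Matrix (Fin M) (Fin N) ℂ) (B' : Matrix (Fin N) (Fin K) ℂ),
      A' * B' = A * B → frob A₀ * frob B₀ ≤ frob A' * frob B') :
    (frob B₀ ^ 2) • (A₀ᴴ * A₀) = (frob A₀ ^ 2) • (B₀ * B₀ᴴ) := by
  set QB : ℝ := frob B₀ ^ 2 with hQB
  set PA : ℝ := frob A₀ ^ 2 with hPA
  -- key stationarity identity
  have key : ∀ X : Matrix (Fin N) (Fin N) ℂ,
      (∑ i, ∑ j, ((starRingEnd ℂ (A₀ i j)) * ((A₀ * X) i j)).re) * QB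
      = (∑ k, ∑ j, ((starRingEnd ℂ (B₀ k j)) * ((X * B₀) k j)).re) * PA := by
    intro X
    set fA : ℝ → ℝ := fun t => ∑ i, ∑ j, ‖(A₀ * ((1 : Matrix (Fin N) (Fin N) ℂ) + t • X)) i j‖ ^ 2 with hfA
    set fB : ℝ → ℝ := fun t =>
      ∑ k, ∑ j, ‖(Ring.inverse ((1 : Matrix (Fin N) (Fin N) ℂ) + t • X) * B₀) k j‖ ^ 2 with hfB
    set dA : ℝ := ∑ i, ∑ j, 2 * ((starRingEnd ℂ (A₀ i j)) * ((A₀ * X) i j)).re with hdA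
    set dB : ℝ := ∑ k, ∑ j, 2 * ((starRingEnd ℂ (B₀ k j)) * ((-(X * B₀)) k j)).re with hdB
    have hA : HasDerivAt fA dA 0 := by
      rw [hfA, hdA]
      apply HasDerivAt.fun_sum; intro i _
      apply HasDerivAt.fun_sum; intro j _
      have hu : HasDerivAt (fun t : ℝ => (A₀ * ((1 : Matrix (Fin N) (Fin N) ℂ) + t • X)) i j)
          ((A₀ * X) i j) 0 := by
        have heq : (fun t : ℝ => (A₀ * ((1 : Matrix (Fin N) (Fin N) ℂ) + t • X)) i j)
            = fun t : ℝ => A₀ i j + t • ((A₀ * X) i j) := by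
          funext t
          rw [Matrix.mul_add, Matrix.mul_smul, Matrix.mul_one]
          simp
        rw [heq]
        simpa using ((hasDerivAt_id (0:ℝ)).smul_const ((A₀ * X) i j)).const_add (A₀ i j)
      have := normSq_hasDerivAt hu
      simpa using this
    have hB : HasDerivAt fB dB 0 := by
      rw [hfB, hdB]
      apply HasDerivAt.fun_sum; intro k _
      apply HasDerivAt.fun_sum; intro j _
      have hu : HasDerivAt
          (fun t : ℝ => (Ring.inverse ((1 : Matrix (Fin N) (Fin N) ℂ) + t • X) * B₀) k j)
          ((-(X * B₀)) k j) 0 := by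
        have heq : (fun t : ℝ => (Ring.inverse ((1 : Matrix (Fin N) (Fin N) ℂ) + t • X) * B₀) k j)
            = fun t : ℝ => ∑ l, Ring.inverse ((1 : Matrix (Fin N) (Fin N) ℂ) + t • X) k l * B₀ l j := by
          funext t; rw [Matrix.mul_apply]
        rw [heq]
        have hval : ((-(X * B₀)) k j) = ∑ l, (-(X k l)) * B₀ l j := by
          simp [Matrix.mul_apply, Finset.sum_neg_distrib, neg_mul]
        rw [hval]
        exact HasDerivAt.fun_sum fun l _ => (inv_entry_hasDerivAt X k l).mul_const (B₀ l j)
      have := normSq_hasDerivAt hu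
      simpa using this
    have hf : HasDerivAt (fun t => fA t * fB t) (dA * fB 0 + fA 0 * dB) 0 := hA.mul hB
    have hlocal : IsLocalMin (fun t => fA t * fB t) 0 := by
      filter_upwards [eventually_isUnit X] with t ht
      set A' := A₀ * ((1 : Matrix (Fin N) (Fin N) ℂ) + t • X) with hA'
      set B' := Ring.inverse ((1 : Matrix (Fin N) (Fin N) ℂ) + t • X) * B₀ with hB'
      have hAB' : A' * B' = A * B := by
        rw [hA', hB', ← h0, Matrix.mul_assoc, ← Matrix.mul_assoc ((1 : Matrix (Fin N) (Fin N) ℂ) + t • X),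
          Ring.mul_inverse_cancel _ ht, Matrix.one_mul]
      have hle := hmin A' B' hAB'
      have h1 : fA t = frob A' ^ 2 := (frob_sq A').symm
      have h2 : fB t = frob B' ^ 2 := (frob_sq B').symm
      have h3 : fA 0 = frob A₀ ^ 2 := by
        rw [hfA]
        simp only [zero_smul, add_zero, Matrix.mul_one]
        exact (frob_sq A₀).symm
      have h4 : fB 0 = frob B₀ ^ 2 := by
        rw [hfB]
        simp only [zero_smul, add_zero, Ring.inverse_one, Matrix.one_mul]
        exact (frob_sq B₀).symm
      have hnn : 0 ≤ frob A₀ * frob B₀ := by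
        apply mul_nonneg <;> exact Real.sqrt_nonneg _
      calc fA 0 * fB 0 = (frob A₀ * frob B₀) ^ 2 := by rw [h3, h4]; ring
        _ ≤ (frob A' * frob B') ^ 2 := pow_le_pow_left₀ hnn hle 2
        _ = fA t * fB t := by rw [h1, h2]; ring
    have hzero : dA * fB 0 + fA 0 * dB = 0 := hlocal.hasDerivAt_eq_zero hf
    have h3 : fA 0 = PA := by
      rw [hfA, hPA]
      simp only [zero_smul, add_zero, Matrix.mul_one]
      exact (frob_sq A₀).symm
    have h4 : fB 0 = QB := by
      rw [hfB, hQB]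
      simp only [zero_smul, add_zero, Ring.inverse_one, Matrix.one_mul]
      exact (frob_sq B₀).symm
    rw [h3, h4] at hzero
    have hdA' : dA = 2 * ∑ i, ∑ j, ((starRingEnd ℂ (A₀ i j)) * ((A₀ * X) i j)).re := by
      rw [hdA, Finset.mul_sum]
      congr 1; funext i
      rw [Finset.mul_sum]
    have hdB' : dB = -(2 * ∑ k, ∑ j, ((starRingEnd ℂ (B₀ k j)) * ((X * B₀) k j)).re) := by
      rw [hdB, Finset.mul_sum, ← Finset.sum_neg_distrib]
      refine Finset.sum_congr rfl fun k _ => ?_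
      rw [Finset.mul_sum, ← Finset.sum_neg_distrib]
      refine Finset.sum_congr rfl fun b _ => ?_
      simp only [Matrix.neg_apply, mul_neg, Complex.neg_re, Complex.mul_re]
    rw [hdA', hdB'] at hzero
    linear_combination hzero / 2
  -- now instantiate with standard basis matrices
  ext i j
  have hSA : ∀ c : ℂ, (∑ a, ∑ b, (starRingEnd ℂ (A₀ a b)) * ((A₀ * Matrix.single j i c) a b))
      = ((A₀ᴴ * A₀) i j) * c := by
    intro c
    have hent : ∀ a b, (A₀ * Matrix.single j i c) a b
        = if i = b then A₀ a j * c else 0 := by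
      intro a b
      rw [Matrix.mul_apply]
      simp only [Matrix.single, Matrix.of_apply, mul_ite, mul_zero, ite_and]
      rw [Finset.sum_ite_eq (Finset.univ) j (fun k => if i = b then A₀ a k * c else 0)]
      simp
    simp only [hent]
    rw [Matrix.mul_apply, Finset.sum_mul]
    congr 1; funext a
    simp [Matrix.conjTranspose_apply, Finset.sum_ite_eq, mul_assoc]
  have hSB : ∀ c : ℂ, (∑ k, ∑ b, (starRingEnd ℂ (B₀ k b)) * ((Matrix.single j i c * B₀) k b))
      = ((B₀ * B₀ᴴ) i j) * c := by
    intro c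
    have hent : ∀ k b, (Matrix.single j i c * B₀) k b
        = if j = k then c * B₀ i b else 0 := by
      intro k b
      rw [Matrix.mul_apply]
      by_cases h : j = k
      · subst h
        simp [Matrix.single, Matrix.of_apply, ite_and, ite_mul, Finset.sum_ite_eq]
      · simp [Matrix.single, Matrix.of_apply, ite_and, h]
    simp only [hent, mul_ite, mul_zero]
    rw [Finset.sum_eq_single j]
    · simp only [eq_self_iff_true, if_true]
      rw [Matrix.mul_apply, Finset.sum_mul]
      refine Finset.sum_congr rfl fun b _ => ?_
      simp only [Matrix.conjTranspose_apply, starRingEnd_apply]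
      ring
    · intro x _ hx
      have hne : ¬ j = x := fun h => hx h.symm
      simp [hne]
    · simp
  have hSAre : ∀ c : ℂ, (∑ a, ∑ b, ((starRingEnd ℂ (A₀ a b)) * ((A₀ * Matrix.single j i c) a b)).re)
      = (((A₀ᴴ * A₀) i j) * c).re := by
    intro c
    rw [← hSA c]
    simp [Complex.re_sum]
  have hSBre : ∀ c : ℂ, (∑ k, ∑ b, ((starRingEnd ℂ (B₀ k b)) * ((Matrix.single j i c * B₀) k b)).re)
      = (((B₀ * B₀ᴴ) i j) * c).re := by
    intro c
    rw [← hSB c]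
    simp [Complex.re_sum]
  have key1 := key (Matrix.single j i 1)
  have keyI := key (Matrix.single j i Complex.I)
  rw [hSAre 1, hSBre 1] at key1
  rw [hSAre Complex.I, hSBre Complex.I] at keyI
  simp only [mul_one] at key1
  simp only [Complex.mul_re, Complex.I_re, Complex.I_im, mul_zero, mul_one, zero_sub] at keyI
  simp only [Matrix.smul_apply]
  apply Complex.ext
  · simp only [Complex.smul_re, smul_eq_mul]
    linarith [key1]
  · simp only [Complex.smul_im, smul_eq_mul]
    linarith [keyI]
end
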